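/- The point x' obtained from an extreme point x of S^n by subdividing a 1-edge is feasible for S^{n+1}: it satisfies all degree constraints, all bound constraints, and all subtour elimination constraints on n+1 vertices. -/

import Mathlib

open Finset
open scoped Classical

noncomputable section

/-- Edge set of the complete graph `K_n` as non-diagonal elements of `Sym2 (Fin n)`. -/
def edgeSet (n : ℕ) : Finset (Sym2 (Fin n)) :=
  Finset.univ.filter (fun e => ¬ e.IsDiag)

/-- The cut `δ(S)`: edges with exactly one endpoint in `S`. -/
def cut {n : ℕ} (S : Finset (Fin n)) : Finset (Sym2 (Fin n)) :=
  Finset.univ.filter (fun e => ¬ e.IsDiag ∧ ∃ u v : Fin n, e = s(u, v) ∧ u ∈ S ∧ v ∉ S)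

/-- Membership in the subtour polytope `S^n`. -/
def InSubtour (n : ℕ) (x : Sym2 (Fin n) → ℝ) : Prop :=
  (∀ e ∈ edgeSet n, 0 ≤ x e ∧ x e ≤ 1) ∧
  (∀ v : Fin n, ∑ e ∈ cut ({v} : Finset (Fin n)), x e = 2) ∧
  (∀ S : Finset (Fin n), 2 ≤ S.card → S.card ≤ n - 2 → 2 ≤ ∑ e ∈ cut S, x e)

/-- Extreme point of the subtour polytope: not a proper convex combination
(equivalently, not the midpoint of two distinct points of `S^n`). -/
def IsExtremePt (n : ℕ) (x : Sym2 (Fin n) → ℝ) : Prop :=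
  InSubtour n x ∧
  ∀ y z : Sym2 (Fin n) → ℝ, InSubtour n y → InSubtour n z →
    (∀ e ∈ edgeSet n, x e = (y e + z e) / 2) → ∀ e ∈ edgeSet n, y e = z e

/-- Support edges of `x`: edges with strictly positive value. -/
def supportEdges {n : ℕ} (x : Sym2 (Fin n) → ℝ) : Finset (Sym2 (Fin n)) :=
  (edgeSet n).filter (fun e => 0 < x e)

/-- Degree of a vertex in the support graph of `x`. -/
def supDeg {n : ℕ} (x : Sym2 (Fin n) → ℝ) (v : Fin n) : ℕ :=
  (cut ({v} : Finset (Fin n)) ∩ supportEdges x).card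

/-- `x` is the incidence vector of a Hamiltonian cycle of `K_n`. -/
def IsHamCycle (n : ℕ) (x : Sym2 (Fin n) → ℝ) : Prop :=
  ∃ σ : Equiv.Perm (Fin n), σ.IsCycle ∧ σ.support = Finset.univ ∧
    ∀ e ∈ edgeSet n, x e = if (∃ v : Fin n, e = s(v, σ v)) then 1 else 0

/-- Cost `c^T x` over the edges of `K_n`. -/
def cost {n : ℕ} (c x : Sym2 (Fin n) → ℝ) : ℝ := ∑ e ∈ edgeSet n, c e * x e

/-- `c` is a metric cost function: nonnegative (symmetry is built into `Sym2`)
and satisfying the triangle inequality. -/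
def IsMetricCost (n : ℕ) (c : Sym2 (Fin n) → ℝ) : Prop :=
  (∀ e, 0 ≤ c e) ∧ ∀ i j k : Fin n, c s(i, k) ≤ c s(i, j) + c s(j, k)

lemma mem_cut {m : ℕ} {S : Finset (Fin m)} {a b : Fin m} :
    s(a, b) ∈ cut S ↔ (a ∈ S ∧ b ∉ S) ∨ (b ∈ S ∧ a ∉ S) := by
  simp only [cut, mem_filter, mem_univ, true_and, Sym2.mk_isDiag_iff]
  constructor
  · rintro ⟨hne, p, q, h, hp, hq⟩
    rw [Sym2.eq_iff] at h
    rcases h with ⟨rfl, rfl⟩ | ⟨rfl, rfl⟩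
    · exact Or.inl ⟨hp, hq⟩
    · exact Or.inr ⟨hp, hq⟩
  · rintro (⟨ha, hb⟩ | ⟨hb, ha⟩)
    · exact ⟨fun h => hb (h ▸ ha), a, b, rfl, ha, hb⟩
    · exact ⟨fun h => ha (h ▸ hb), b, a, Sym2.eq_swap, hb, ha⟩

lemma cut_compl {m : ℕ} (S : Finset (Fin m)) : cut Sᶜ = cut S := by
  ext e
  induction e using Sym2.ind with
  | _ a b =>
    simp only [mem_cut, Finset.mem_compl]
    tauto

lemma cut_subset_edgeSet {m : ℕ} (S : Finset (Fin m)) : cut S ⊆ edgeSet m := by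
  intro e he
  simp only [cut, mem_filter] at he
  simp only [edgeSet, mem_filter, mem_univ, true_and]
  exact he.2.1

lemma cut_ge_two {n : ℕ} (hn : 3 ≤ n) {x : Sym2 (Fin n) → ℝ} (hx : InSubtour n x)
    {T : Finset (Fin n)} (hc2 : 2 ≤ T.card) (hc3 : T.card ≤ n - 1) :
    2 ≤ ∑ e ∈ cut T, x e := by
  rcases le_or_gt T.card (n - 2) with h | h
  · exact hx.2.2 T hc2 h
  · have hcard : Tᶜ.card = 1 := by
      rw [Finset.card_compl, Fintype.card_fin]; omega
    obtain ⟨z, hz⟩ := Finset.card_eq_one.mp hcard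
    rw [← cut_compl, hz]
    exact (hx.2.1 z).ge

lemma cut_decomp {n : ℕ} (S : Finset (Fin (n+1))) (hw : Fin.last n ∉ S) :
    cut S = ((cut (Finset.univ.filter fun z : Fin n => z.castSucc ∈ S)).image
        (Sym2.map Fin.castSucc))
      ∪ ((Finset.univ.filter fun z : Fin n => z.castSucc ∈ S).image
        (fun z => s(z.castSucc, Fin.last n))) := by
  set T := Finset.univ.filter fun z : Fin n => z.castSucc ∈ S with hT
  have hmemT : ∀ z : Fin n, z ∈ T ↔ z.castSucc ∈ S := by
    intro z; simp [hT]
  ext e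
  constructor
  · intro he
    obtain ⟨-, hd, p, q, rfl, hp, hq⟩ := Finset.mem_filter.mp he
    have hpl : p ≠ Fin.last n := fun h => hw (h ▸ hp)
    obtain ⟨p', rfl⟩ := Fin.exists_castSucc_eq.mpr hpl
    rcases Fin.eq_castSucc_or_eq_last q with ⟨q', rfl⟩ | rfl
    · apply Finset.mem_union_left
      refine Finset.mem_image.mpr ⟨s(p', q'), ?_, by simp⟩
      exact mem_cut.mpr (Or.inl ⟨(hmemT p').mpr hp, fun h => hq ((hmemT q').mp h)⟩)
    · apply Finset.mem_union_right
      refine Finset.mem_image.mpr ⟨p', (hmemT p').mpr hp, ?_⟩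
      rfl
  · intro he
    rcases Finset.mem_union.mp he with he | he
    · obtain ⟨e', he', rfl⟩ := Finset.mem_image.mp he
      induction e' using Sym2.ind with
      | _ p q =>
        rcases mem_cut.mp he' with ⟨hp, hq⟩ | ⟨hq, hp⟩
        · exact Sym2.map_pair_eq _ _ _ ▸ mem_cut.mpr
            (Or.inl ⟨(hmemT p).mp hp, fun h => hq ((hmemT q).mpr h)⟩)
        · exact Sym2.map_pair_eq _ _ _ ▸ mem_cut.mpr
            (Or.inr ⟨(hmemT q).mp hq, fun h => hp ((hmemT p).mpr h)⟩)
    · obtain ⟨z, hz, rfl⟩ := Finset.mem_image.mp he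
      exact mem_cut.mpr (Or.inl ⟨(hmemT z).mp hz, hw⟩)

lemma cut_decomp_disj {n : ℕ} (S : Finset (Fin (n+1))) :
    Disjoint ((cut (Finset.univ.filter fun z : Fin n => z.castSucc ∈ S)).image
        (Sym2.map Fin.castSucc))
      ((Finset.univ.filter fun z : Fin n => z.castSucc ∈ S).image
        (fun z => s(z.castSucc, Fin.last n))) := by
  rw [Finset.disjoint_left]
  intro e he1 he2
  obtain ⟨e', _, rfl⟩ := Finset.mem_image.mp he1
  obtain ⟨z, _, hz⟩ := Finset.mem_image.mp he2
  induction e' using Sym2.ind with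
  | _ p q =>
    rw [Sym2.map_pair_eq, Sym2.eq_iff] at hz
    rcases hz with ⟨_, h⟩ | ⟨_, h⟩ <;>
      exact absurd h (Fin.castSucc_lt_last _).ne'

lemma sum_cut_eval (n : ℕ) (u v : Fin n) (huv : u ≠ v)
    (x : Sym2 (Fin n) → ℝ) (he : x s(u, v) = 1)
    (x' : Sym2 (Fin (n + 1)) → ℝ)
    (h1 : x' s(u.castSucc, Fin.last n) = 1)
    (h2 : x' s(Fin.last n, v.castSucc) = 1)
    (h3 : x' s(u.castSucc, v.castSucc) = 0)
    (h4 : ∀ z : Fin n, z ≠ u → z ≠ v → x' s(z.castSucc, Fin.last n) = 0)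
    (h5 : ∀ a b : Fin n, s(a, b) ≠ s(u, v) → x' s(a.castSucc, b.castSucc) = x s(a, b))
    (S : Finset (Fin (n+1))) (hw : Fin.last n ∉ S) :
    ∑ e ∈ cut S, x' e =
      ∑ e ∈ cut (Finset.univ.filter fun z : Fin n => z.castSucc ∈ S), x e
      - (if s(u, v) ∈ cut (Finset.univ.filter fun z : Fin n => z.castSucc ∈ S)
          then (1 : ℝ) else 0)
      + (if u ∈ (Finset.univ.filter fun z : Fin n => z.castSucc ∈ S) then (1 : ℝ) else 0)
      + (if v ∈ (Finset.univ.filter fun z : Fin n => z.castSucc ∈ S) then (1 : ℝ) else 0) := by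
  set T := Finset.univ.filter fun z : Fin n => z.castSucc ∈ S with hT
  rw [cut_decomp S hw, Finset.sum_union (cut_decomp_disj S),
    Finset.sum_image (fun a _ b _ h => Sym2.map.injective (Fin.castSucc_injective n) h),
    Finset.sum_image (fun a _ b _ h => by
      rw [Sym2.eq_iff] at h
      rcases h with ⟨h, -⟩ | ⟨h, -⟩
      · exact Fin.castSucc_injective n h
      · exact absurd h (Fin.castSucc_lt_last _).ne)]
  have hfirst : ∑ e ∈ cut T, x' (Sym2.map Fin.castSucc e)
      = ∑ e ∈ cut T, (x e - if e = s(u, v) then (1 : ℝ) else 0) := by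
    apply Finset.sum_congr rfl
    intro e he'
    induction e using Sym2.ind with
    | _ p q =>
      by_cases hpq : s(p, q) = s(u, v)
      · rw [hpq, if_pos rfl, he, Sym2.map_pair_eq, h3]
        ring
      · rw [if_neg hpq, Sym2.map_pair_eq, h5 p q hpq]
        ring
  have hsecond : ∑ z ∈ T, x' s(z.castSucc, Fin.last n)
      = ∑ z ∈ T, ((if z = u then (1 : ℝ) else 0) + (if z = v then (1 : ℝ) else 0)) := by
    apply Finset.sum_congr rfl
    intro z _
    by_cases hzu : z = u
    · subst hzu
      rw [if_pos rfl, if_neg huv, h1]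
      ring
    · by_cases hzv : z = v
      · subst hzv
        rw [if_neg hzu, if_pos rfl, Sym2.eq_swap, h2]
        ring
      · rw [if_neg hzu, if_neg hzv, h4 z hzu hzv]
        ring
  rw [hfirst, hsecond, Finset.sum_sub_distrib, Finset.sum_add_distrib]
  simp only [Finset.sum_ite_eq']
  ring

lemma card_filter_castSucc {n : ℕ} (S : Finset (Fin (n+1))) (hw : Fin.last n ∉ S) :
    (Finset.univ.filter fun z : Fin n => z.castSucc ∈ S).card = S.card := by
  rw [← Finset.card_image_of_injective _ (Fin.castSucc_injective n)]
  congr 1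
  ext a
  simp only [Finset.mem_image, Finset.mem_filter, Finset.mem_univ, true_and]
  constructor
  · rintro ⟨z, hz, rfl⟩; exact hz
  · intro ha
    have hal : a ≠ Fin.last n := fun h => hw (h ▸ ha)
    obtain ⟨z, rfl⟩ := Fin.exists_castSucc_eq.mpr hal
    exact ⟨z, ha, rfl⟩

lemma cut_last {n : ℕ} :
    cut ({Fin.last n} : Finset (Fin (n+1)))
      = Finset.univ.image (fun z : Fin n => s(z.castSucc, Fin.last n)) := by
  ext e
  constructor
  · intro he
    obtain ⟨-, hd, p, q, rfl, hp, hq⟩ := Finset.mem_filter.mp he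
    rw [Finset.mem_singleton] at hp hq
    subst hp
    obtain ⟨z, rfl⟩ := Fin.exists_castSucc_eq.mpr hq
    exact Finset.mem_image.mpr ⟨z, Finset.mem_univ z, Sym2.eq_swap⟩
  · intro he
    obtain ⟨z, -, rfl⟩ := Finset.mem_image.mp he
    exact mem_cut.mpr (Or.inr ⟨Finset.mem_singleton_self _,
      fun h => (Fin.castSucc_lt_last z).ne (Finset.mem_singleton.mp h)⟩)

lemma sum_cut_ge (n : ℕ) (hn : 3 ≤ n) (u v : Fin n) (huv : u ≠ v)
    (x : Sym2 (Fin n) → ℝ) (hx : InSubtour n x) (he : x s(u, v) = 1)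
    (x' : Sym2 (Fin (n + 1)) → ℝ)
    (h1 : x' s(u.castSucc, Fin.last n) = 1)
    (h2 : x' s(Fin.last n, v.castSucc) = 1)
    (h3 : x' s(u.castSucc, v.castSucc) = 0)
    (h4 : ∀ z : Fin n, z ≠ u → z ≠ v → x' s(z.castSucc, Fin.last n) = 0)
    (h5 : ∀ a b : Fin n, s(a, b) ≠ s(u, v) → x' s(a.castSucc, b.castSucc) = x s(a, b))
    (S : Finset (Fin (n+1))) (hw : Fin.last n ∉ S)
    (hc2 : 2 ≤ S.card) (hc3 : S.card ≤ n - 1) :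
    2 ≤ ∑ e ∈ cut S, x' e := by
  rw [sum_cut_eval n u v huv x he x' h1 h2 h3 h4 h5 S hw]
  set T := Finset.univ.filter fun z : Fin n => z.castSucc ∈ S with hT
  have hTcard : T.card = S.card := card_filter_castSucc S hw
  have hbig : 2 ≤ ∑ e ∈ cut T, x e :=
    cut_ge_two hn hx (hTcard ▸ hc2) (hTcard ▸ hc3)
  have hmemuv : s(u, v) ∈ cut T ↔ (u ∈ T ∧ v ∉ T) ∨ (v ∈ T ∧ u ∉ T) := mem_cut
  by_cases hu : u ∈ T <;> by_cases hv : v ∈ T <;>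
    simp only [hu, hv, if_pos, if_neg, hmemuv, not_true, not_false_iff, and_true,
      and_false, false_and, true_and, or_false, false_or, if_true, if_false,
      not_false_eq_true] <;>
    linarith

/-- Subdividing a 1-edge of an extreme point of `S^n` yields a feasible point
of `S^{n+1}`: all bound, degree, and subtour constraints hold. -/
theorem subdivide_one_edge_feasible (n : ℕ) (hn : 3 ≤ n) (u v : Fin n) (huv : u ≠ v)
    (x : Sym2 (Fin n) → ℝ) (hx : IsExtremePt n x) (he : x s(u, v) = 1)
    (x' : Sym2 (Fin (n + 1)) → ℝ)
    (h1 : x' s(u.castSucc, Fin.last n) = 1)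
    (h2 : x' s(Fin.last n, v.castSucc) = 1)
    (h3 : x' s(u.castSucc, v.castSucc) = 0)
    (h4 : ∀ z : Fin n, z ≠ u → z ≠ v → x' s(z.castSucc, Fin.last n) = 0)
    (h5 : ∀ a b : Fin n, s(a, b) ≠ s(u, v) → x' s(a.castSucc, b.castSucc) = x s(a, b)) :
    InSubtour (n + 1) x' := by
  obtain ⟨hxS, hxExt⟩ := hx
  obtain ⟨hxb, hxd, hxs⟩ := hxS
  refine ⟨?_, ?_, ?_⟩
  · -- bounds
    intro e heE
    have hd : ¬ e.IsDiag := by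
      simpa [edgeSet] using heE
    induction e using Sym2.ind with
    | _ a b =>
      rw [Sym2.mk_isDiag_iff] at hd
      rcases Fin.eq_castSucc_or_eq_last a with ⟨a', rfl⟩ | rfl
      · rcases Fin.eq_castSucc_or_eq_last b with ⟨b', rfl⟩ | rfl
        · by_cases hab : s(a', b') = s(u, v)
          · have : x' s(a'.castSucc, b'.castSucc) = 0 := by
              rw [Sym2.eq_iff] at hab
              rcases hab with ⟨rfl, rfl⟩ | ⟨rfl, rfl⟩
              · exact h3
              · rw [Sym2.eq_swap]; exact h3
            rw [this]; norm_num
          · rw [h5 a' b' hab]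
            exact hxb s(a', b') (by
              simp only [edgeSet, Finset.mem_filter, Finset.mem_univ, true_and,
                Sym2.mk_isDiag_iff]
              exact fun h => hd (congrArg Fin.castSucc h))
        · by_cases hau : a' = u
          · subst hau; rw [h1]; norm_num
          · by_cases hav : a' = v
            · subst hav; rw [Sym2.eq_swap, h2]; norm_num
            · rw [h4 a' hau hav]; norm_num
      · rcases Fin.eq_castSucc_or_eq_last b with ⟨b', rfl⟩ | rfl
        · by_cases hbu : b' = u
          · subst hbu; rw [Sym2.eq_swap, h1]; norm_num
          · by_cases hbv : b' = v
            · subst hbv; rw [h2]; norm_num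
            · rw [Sym2.eq_swap, h4 b' hbu hbv]; norm_num
        · exact absurd rfl hd
  · -- degrees
    intro a
    rcases Fin.eq_castSucc_or_eq_last a with ⟨z, rfl⟩ | rfl
    · have hw : Fin.last n ∉ ({z.castSucc} : Finset (Fin (n+1))) := by
        simp only [Finset.mem_singleton]
        exact (Fin.castSucc_lt_last z).ne'
      rw [sum_cut_eval n u v huv x he x' h1 h2 h3 h4 h5 _ hw]
      have hTs : (Finset.univ.filter fun w : Fin n => w.castSucc ∈
          ({z.castSucc} : Finset (Fin (n+1)))) = {z} := by
        ext w
        simp [Fin.castSucc_inj]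
      rw [hTs, hxd z]
      by_cases hzu : z = u
      · subst hzu
        rw [if_pos (mem_cut.mpr (Or.inl ⟨Finset.mem_singleton_self _,
            fun h => huv (Finset.mem_singleton.mp h).symm⟩)),
          if_pos (Finset.mem_singleton_self _),
          if_neg (fun h => huv (Finset.mem_singleton.mp h).symm)]
        ring
      · by_cases hzv : z = v
        · subst hzv
          rw [if_pos (mem_cut.mpr (Or.inr ⟨Finset.mem_singleton_self _,
              fun h => huv (Finset.mem_singleton.mp h)⟩)),
            if_neg (fun h => huv (Finset.mem_singleton.mp h)),
            if_pos (Finset.mem_singleton_self _)]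
          ring
        · rw [if_neg (fun h => by
              rcases mem_cut.mp h with ⟨h', -⟩ | ⟨h', -⟩
              · exact hzu (Finset.mem_singleton.mp h').symm
              · exact hzv (Finset.mem_singleton.mp h').symm),
            if_neg (fun h => hzu (Finset.mem_singleton.mp h).symm),
            if_neg (fun h => hzv (Finset.mem_singleton.mp h).symm)]
          ring
    · rw [cut_last, Finset.sum_image (fun a _ b _ h => by
        rw [Sym2.eq_iff] at h
        rcases h with ⟨h, -⟩ | ⟨h, -⟩
        · exact Fin.castSucc_injective n h
        · exact absurd h (Fin.castSucc_lt_last _).ne)]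
      have : ∑ z : Fin n, x' s(z.castSucc, Fin.last n)
          = ∑ z : Fin n, ((if z = u then (1:ℝ) else 0) + (if z = v then (1:ℝ) else 0)) := by
        apply Finset.sum_congr rfl
        intro z _
        by_cases hzu : z = u
        · subst hzu; rw [if_pos rfl, if_neg huv, h1]; ring
        · by_cases hzv : z = v
          · subst hzv; rw [if_neg hzu, if_pos rfl, Sym2.eq_swap, h2]; ring
          · rw [if_neg hzu, if_neg hzv, h4 z hzu hzv]; ring
      rw [this, Finset.sum_add_distrib]
      simp only [Finset.sum_ite_eq', Finset.mem_univ, if_true]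
      norm_num
  · -- subtour
    intro S hc2 hc3
    have hc3' : S.card ≤ n - 1 := by omega
    by_cases hw : Fin.last n ∈ S
    · rw [← cut_compl]
      have hw' : Fin.last n ∉ Sᶜ := by simp [hw]
      have hcc : Sᶜ.card = n + 1 - S.card := by
        rw [Finset.card_compl, Fintype.card_fin]
      exact sum_cut_ge n hn u v huv x ⟨hxb, hxd, hxs⟩ he x' h1 h2 h3 h4 h5 Sᶜ hw'
        (by omega) (by omega)
    · exact sum_cut_ge n hn u v huv x ⟨hxb, hxd, hxs⟩ he x' h1 h2 h3 h4 h5 S hw hc2 hc3'
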